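/- Let t, r ≥ 1, let h ∈ ℝᵗ, let H be a real r×t matrix such that HᵀH is positive definite, and let α > 0. For P ≥ 0 define f(P) = sup over unit vectors ψ ∈ ℝᵗ of (1 + αP·⟨h,ψ⟩²)/(1 + αP·‖Hψ‖²), and define λ_max = sup over unit vectors ψ of ⟨h,ψ⟩²/‖Hψ‖². Then f(P) tends to λ_max as P → ∞. -/

import Mathlib

open Matrix Filter

lemma aux_key_est (a b c A P α : ℝ) (hα : 0 < α) (hc : 0 < c) (hcb : c ≤ b)
    (hA : |b - a| ≤ A) (hP : 0 ≤ P) :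
    |(1 + α*P*a)/(1 + α*P*b) - a/b| ≤ A/(c*(1+α*P*c)) := by
  have hb0 : 0 < b := lt_of_lt_of_le hc hcb
  have hαP : 0 ≤ α * P := mul_nonneg hα.le hP
  have hdenc : 0 < 1 + α*P*c := by nlinarith
  have hden : 0 < 1 + α*P*b := by nlinarith
  have hrw : (1 + α*P*a)/(1 + α*P*b) - a/b = (b - a)/(b*(1+α*P*b)) := by
    field_simp; ring
  rw [hrw, abs_div, abs_of_pos (mul_pos hb0 hden)]
  apply div_le_div₀ (le_trans (abs_nonneg _) hA) hA (mul_pos hc hdenc)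
  have : 1 + α*P*c ≤ 1 + α*P*b := by nlinarith
  exact mul_le_mul hcb this hdenc.le hb0.le

theorem stmt_8 (t r : ℕ) (ht : 1 ≤ t) (hr : 1 ≤ r)
    (h : Fin t → ℝ) (H : Matrix (Fin r) (Fin t) ℝ)
    (hH : (Hᵀ * H).PosDef) (α : ℝ) (hα : 0 < α)
    (f : ℝ → ℝ)
    (hf : ∀ P : ℝ, f P = sSup {x : ℝ | ∃ ψ : Fin t → ℝ, ψ ⬝ᵥ ψ = 1 ∧
      x = (1 + α * P * (h ⬝ᵥ ψ) ^ 2) / (1 + α * P * (H.mulVec ψ ⬝ᵥ H.mulVec ψ))})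
    (lmax : ℝ)
    (hlmax : lmax = sSup {x : ℝ | ∃ ψ : Fin t → ℝ, ψ ⬝ᵥ ψ = 1 ∧
      x = (h ⬝ᵥ ψ) ^ 2 / (H.mulVec ψ ⬝ᵥ H.mulVec ψ)}) :
    Tendsto f atTop (nhds lmax) := by
  classical
  set a : (Fin t → ℝ) → ℝ := fun ψ => (h ⬝ᵥ ψ) ^ 2 with ha_def
  set b : (Fin t → ℝ) → ℝ := fun ψ => H.mulVec ψ ⬝ᵥ H.mulVec ψ with hb_def
  set S : Set (Fin t → ℝ) := {ψ | ψ ⬝ᵥ ψ = 1} with hS_def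
  -- positivity of b on S
  have hbpos : ∀ ψ ∈ S, 0 < b ψ := by
    intro ψ hψ
    have hψ0 : ψ ≠ 0 := by
      intro h0
      simp only [hS_def, Set.mem_setOf_eq, h0, zero_dotProduct] at hψ
      exact zero_ne_one hψ
    have := hH.dotProduct_mulVec_pos hψ0
    simpa [hb_def, star_trivial, ← Matrix.mulVec_mulVec, Matrix.dotProduct_mulVec,
      Matrix.vecMul_transpose] using this
  -- nonemptiness of S
  have hSne : S.Nonempty := by
    refine ⟨Pi.single ⟨0, ht⟩ 1, ?_⟩
    simp [hS_def, dotProduct_single]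
  -- continuity
  have ha_cont : Continuous a := by
    have : Continuous fun ψ : Fin t → ℝ => h ⬝ᵥ ψ := by
      simp only [dotProduct]
      exact continuous_finset_sum _ fun i _ => continuous_const.mul (continuous_apply i)
    exact this.pow 2
  have hb_cont : Continuous b := by
    simp only [hb_def, dotProduct, Matrix.mulVec]
    exact continuous_finset_sum _ fun i _ =>
      (continuous_finset_sum _ fun j _ => continuous_const.mul (continuous_apply j)).mul
      (continuous_finset_sum _ fun j _ => continuous_const.mul (continuous_apply j))
  -- compactness of S
  have hScomp : IsCompact S := by
    have hclosed : IsClosed S := by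
      have : Continuous fun ψ : Fin t → ℝ => ψ ⬝ᵥ ψ := by
        simp only [dotProduct]
        exact continuous_finset_sum _ fun i _ =>
          (continuous_apply i).mul (continuous_apply i)
      exact isClosed_singleton.preimage this
    refine (isCompact_closedBall (0 : Fin t → ℝ) 1).of_isClosed_subset hclosed ?_
    intro ψ hψ
    rw [Metric.mem_closedBall, dist_zero_right]
    rw [pi_norm_le_iff_of_nonneg zero_le_one]
    intro i
    rw [Real.norm_eq_abs, abs_le_one_iff_mul_self_le_one]
    calc ψ i * ψ i ≤ ∑ j, ψ j * ψ j :=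
          Finset.single_le_sum (fun j _ => mul_self_nonneg (ψ j)) (Finset.mem_univ i)
      _ = 1 := hψ
  -- min of b on S
  obtain ⟨ψc, hψcS, hmin⟩ := hScomp.exists_isMinOn hSne hb_cont.continuousOn
  set c : ℝ := b ψc with hc_def
  have hc : 0 < c := hbpos ψc hψcS
  have hcb : ∀ ψ ∈ S, c ≤ b ψ := fun ψ hψ => hmin hψ
  -- max of |b - a| on S
  obtain ⟨ψA, hψAS, hmaxA⟩ := hScomp.exists_isMaxOn hSne
    ((continuous_abs.comp (hb_cont.sub ha_cont)).continuousOn)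
  set A : ℝ := |b ψA - a ψA| with hA_def
  have hAle : ∀ ψ ∈ S, |b ψ - a ψ| ≤ A := fun ψ hψ => hmaxA hψ
  -- max of q on S
  have hq_cont : ContinuousOn (fun ψ => a ψ / b ψ) S :=
    ha_cont.continuousOn.div hb_cont.continuousOn fun ψ hψ => (hbpos ψ hψ).ne'
  obtain ⟨ψQ, hψQS, hmaxQ⟩ := hScomp.exists_isMaxOn hSne hq_cont
  set Q : ℝ := a ψQ / b ψQ with hQ_def
  have hQle : ∀ ψ ∈ S, a ψ / b ψ ≤ Q := fun ψ hψ => hmaxQ hψ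
  -- lmax set facts
  have hbddq : BddAbove {x : ℝ | ∃ ψ : Fin t → ℝ, ψ ⬝ᵥ ψ = 1 ∧
      x = (h ⬝ᵥ ψ) ^ 2 / (H.mulVec ψ ⬝ᵥ H.mulVec ψ)} := by
    refine ⟨Q, ?_⟩
    rintro x ⟨ψ, hψ, rfl⟩
    exact hQle ψ hψ
  have hq_le_lmax : ∀ ψ ∈ S, a ψ / b ψ ≤ lmax := by
    intro ψ hψ
    rw [hlmax]
    exact le_csSup hbddq ⟨ψ, hψ, rfl⟩
  set D : ℝ → ℝ := fun P => A / (c * (1 + α * P * c)) with hD_def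
  -- key pointwise estimate
  have key : ∀ P : ℝ, 0 ≤ P → ∀ ψ ∈ S,
      |(1 + α * P * a ψ) / (1 + α * P * b ψ) - a ψ / b ψ| ≤ D P :=
    fun P hP ψ hψ => aux_key_est (a ψ) (b ψ) c A P α hα hc (hcb ψ hψ) (hAle ψ hψ) hP
  obtain ⟨ψ₀, hψ₀⟩ := hSne
  -- bound on |f P - lmax|
  have bound : ∀ P : ℝ, 0 ≤ P → |f P - lmax| ≤ D P := by
    intro P hP
    set Sf : Set ℝ := {x : ℝ | ∃ ψ : Fin t → ℝ, ψ ⬝ᵥ ψ = 1 ∧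
      x = (1 + α * P * (h ⬝ᵥ ψ) ^ 2) / (1 + α * P * (H.mulVec ψ ⬝ᵥ H.mulVec ψ))} with hSf_def
    have hSfne : Sf.Nonempty := ⟨_, ψ₀, hψ₀, rfl⟩
    have hg_le : ∀ ψ ∈ S, (1 + α * P * a ψ) / (1 + α * P * b ψ) ≤ a ψ / b ψ + D P := by
      intro ψ hψ
      have := key P hP ψ hψ
      have := abs_le.mp this
      linarith [this.2]
    have hg_ge : ∀ ψ ∈ S, a ψ / b ψ ≤ (1 + α * P * a ψ) / (1 + α * P * b ψ) + D P := by
      intro ψ hψ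
      have := abs_le.mp (key P hP ψ hψ)
      linarith [this.1]
    have hbddf : BddAbove Sf := by
      refine ⟨Q + D P, ?_⟩
      rintro x ⟨ψ, hψ, rfl⟩
      exact le_trans (hg_le ψ hψ) (add_le_add_left (hQle ψ hψ) _)
    have h1 : f P ≤ lmax + D P := by
      rw [hf P]
      apply csSup_le hSfne
      rintro x ⟨ψ, hψ, rfl⟩
      exact le_trans (hg_le ψ hψ) (add_le_add_left (hq_le_lmax ψ hψ) _)
    have h2 : lmax ≤ f P + D P := by
      rw [hlmax]
      have hne2 : {x : ℝ | ∃ ψ : Fin t → ℝ, ψ ⬝ᵥ ψ = 1 ∧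
          x = (h ⬝ᵥ ψ) ^ 2 / (H.mulVec ψ ⬝ᵥ H.mulVec ψ)}.Nonempty := ⟨_, ψ₀, hψ₀, rfl⟩
      apply csSup_le hne2
      rintro x ⟨ψ, hψ, rfl⟩
      refine le_trans (hg_ge ψ hψ) (add_le_add_left ?_ _)
      rw [hf P]
      exact le_csSup hbddf ⟨ψ, hψ, rfl⟩
    rw [abs_sub_le_iff]
    constructor <;> linarith
  -- D tends to 0
  have hD0 : Tendsto D atTop (nhds 0) := by
    have h1 : Tendsto (fun P : ℝ => α * P * c) atTop atTop :=
      (tendsto_id.const_mul_atTop hα).atTop_mul_const hc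
    have h2 : Tendsto (fun P : ℝ => 1 + α * P * c) atTop atTop :=
      tendsto_atTop_add_const_left _ 1 h1
    have h3 : Tendsto (fun P : ℝ => c * (1 + α * P * c)) atTop atTop :=
      h2.const_mul_atTop hc
    exact tendsto_const_nhds.div_atTop h3
  -- conclude
  rw [← tendsto_sub_nhds_zero_iff]
  apply squeeze_zero_norm' _ hD0
  filter_upwards [eventually_ge_atTop (0 : ℝ)] with P hP
  simpa [Real.norm_eq_abs] using bound P hP
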